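/- For every nonnegative integer a and every integer d, the set E_{a,d} = {n ∈ ℕ : s₂(n+a) - s₂(n) = d} has a natural (asymptotic) density, i.e. the limit μ_a(d) = lim_{N→∞} (1/N)·|E_{a,d} ∩ {0,…,N-1}| exists, where s₂ denotes the binary sum-of-digits function. -/

import Mathlib

open Filter Finset

/-- Binary sum-of-digits function. -/
def s2 (n : ℕ) : ℕ := (Nat.digits 2 n).sum

/-- `hasDensity a d x` means the set `E_{a,d} = {n : s₂(n+a) - s₂(n) = d}`
has asymptotic density `x`. -/
def hasDensity (a : ℕ) (d : ℤ) (x : ℝ) : Prop :=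
  Tendsto (fun N : ℕ =>
      (((Finset.range N).filter (fun n => (s2 (n + a) : ℤ) - s2 n = d)).card : ℝ) / N)
    atTop (nhds x)

lemma s2_rec (n : ℕ) : s2 n = n % 2 + s2 (n / 2) := by
  rcases Nat.eq_zero_or_pos n with h | h
  · simp [h, s2]
  · rw [s2, Nat.digits_def' (by norm_num : (1:ℕ) < 2) h]
    simp [s2, Nat.add_comm]

lemma s2_mul_pow_add : ∀ (m t q : ℕ), t < 2 ^ m → s2 (q * 2 ^ m + t) = s2 q + s2 t := by
  intro m
  induction m with
  | zero =>
    intro t q ht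
    interval_cases t
    simp [s2]
  | succ m ih =>
    intro t q ht
    have hd : 2 * (t / 2) + t % 2 = t := by omega
    have h1 : q * 2 ^ (m + 1) + t = 2 * (q * 2 ^ m + t / 2) + t % 2 := by
      calc q * 2 ^ (m + 1) + t = 2 * (q * 2 ^ m) + (2 * (t / 2) + t % 2) := by rw [hd]; ring
        _ = 2 * (q * 2 ^ m + t / 2) + t % 2 := by ring
    have ht2 : t / 2 < 2 ^ m := by
      have hp : (2:ℕ) ^ (m + 1) = 2 * 2 ^ m := by ring
      omega
    have hmod : (2 * (q * 2 ^ m + t / 2) + t % 2) % 2 = t % 2 := by omega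
    have hdiv : (2 * (q * 2 ^ m + t / 2) + t % 2) / 2 = q * 2 ^ m + t / 2 := by omega
    rw [h1, s2_rec (2 * (q * 2 ^ m + t / 2) + t % 2), hmod, hdiv, ih _ q ht2, s2_rec t]
    omega

lemma key_mod (a : ℕ) (m n : ℕ) (h : n % 2 ^ m + a < 2 ^ m) :
    (s2 (n + a) : ℤ) - s2 n = (s2 (n % 2 ^ m + a) : ℤ) - s2 (n % 2 ^ m) := by
  obtain ⟨q, r, hr, rfl⟩ : ∃ q r, r < 2 ^ m ∧ n = q * 2 ^ m + r :=
    ⟨n / 2 ^ m, n % 2 ^ m, Nat.mod_lt _ (by positivity), (Nat.div_add_mod' n (2 ^ m)).symm⟩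
  have hmod : (q * 2 ^ m + r) % 2 ^ m = r := by
    rw [Nat.mul_add_mod', Nat.mod_eq_of_lt hr]
  rw [hmod] at h ⊢
  rw [add_assoc, s2_mul_pow_add m (r + a) q h, s2_mul_pow_add m r q hr]
  push_cast
  ring

lemma count_mod_exact (M K : ℕ) (Q : ℕ → Prop) [DecidablePred Q] :
    ((range (K * M)).filter (fun n => Q (n % M))).card
      = K * ((range M).filter Q).card := by
  induction K with
  | zero => simp
  | succ K ih =>
    have h : (K + 1) * M = K * M + M := by ring
    rw [h, Finset.range_add, Finset.filter_union, Finset.card_union_of_disjoint, ih,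
      Finset.filter_map, Finset.card_map]
    · have : ((range M).filter ((fun n => Q (n % M)) ∘ (addLeftEmbedding (K * M)))).card
          = ((range M).filter Q).card := by
        congr 1
        apply Finset.filter_congr
        intro r hr
        simp only [Finset.mem_range] at hr
        simp only [Function.comp, addLeftEmbedding_apply]
        rw [Nat.mul_add_mod', Nat.mod_eq_of_lt hr]
      rw [this]; ring
    · rw [Finset.disjoint_left]
      intro x hx hx2
      simp only [Finset.mem_filter, Finset.mem_range, Finset.mem_map,
        addLeftEmbedding_apply] at hx hx2
      obtain ⟨⟨r, hr, rfl⟩, -⟩ := hx2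
      omega

section main

variable (a : ℕ) (d : ℤ)

/-- The number of good residues mod `2^m`. -/
def sct (m : ℕ) : ℕ :=
  ((range (2 ^ m)).filter
    (fun r => r + a < 2 ^ m ∧ (s2 (r + a) : ℤ) - s2 r = d)).card

lemma sct_le_pow (m : ℕ) : sct a d m ≤ 2 ^ m :=
  le_trans (Finset.card_filter_le _ _) (by rw [Finset.card_range])

/-- Lower bound for the counting function. -/
lemma A_lower (m N : ℕ) :
    (N / 2 ^ m) * sct a d m ≤
      ((range N).filter (fun n => (s2 (n + a) : ℤ) - s2 n = d)).card := by
  set M := 2 ^ m with hM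
  have hMpos : 0 < M := by positivity
  rw [sct, ← count_mod_exact M (N / M)]
  apply Finset.card_le_card
  intro n hn
  simp only [Finset.mem_filter, Finset.mem_range] at hn ⊢
  obtain ⟨hn1, hn2, hn3⟩ := hn
  have hlt : n < N := lt_of_lt_of_le hn1 (Nat.div_mul_le_self N M)
  refine ⟨hlt, ?_⟩
  rw [key_mod a m n hn2]
  exact hn3

/-- Exact-multiple upper bound. -/
lemma A_upper_exact (m K : ℕ) :
    ((range (K * 2 ^ m)).filter (fun n => (s2 (n + a) : ℤ) - s2 n = d)).card ≤
      K * (sct a d m + a) := by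
  set M := 2 ^ m with hM
  have hMpos : 0 < M := by positivity
  have hsub : (range (K * M)).filter (fun n => (s2 (n + a) : ℤ) - s2 n = d) ⊆
      ((range (K * M)).filter (fun n => (n % M + a < M ∧ (s2 (n % M + a) : ℤ) - s2 (n % M) = d)))
      ∪ ((range (K * M)).filter (fun n => ¬ (n % M + a < M))) := by
    intro n hn
    simp only [Finset.mem_filter, Finset.mem_range, Finset.mem_union] at hn ⊢
    obtain ⟨hn1, hn2⟩ := hn
    by_cases hc : n % M + a < M
    · exact Or.inl ⟨hn1, hc, by rw [← key_mod a m n hc]; exact hn2⟩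
    · exact Or.inr ⟨hn1, hc⟩
  have h1 : ((range (K * M)).filter
      (fun n => (n % M + a < M ∧ (s2 (n % M + a) : ℤ) - s2 (n % M) = d))).card
      = K * sct a d m :=
    count_mod_exact M K (fun r => r + a < M ∧ (s2 (r + a) : ℤ) - s2 r = d)
  have h2 : ((range (K * M)).filter (fun n => ¬ (n % M + a < M))).card ≤ K * a := by
    rw [count_mod_exact M K (fun r => ¬ (r + a < M))]
    have : (range M).filter (fun r => ¬ (r + a < M)) ⊆ Finset.Ico (M - a) M := by
      intro r hr
      simp only [Finset.mem_filter, Finset.mem_range] at hr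
      simp only [Finset.mem_Ico]
      omega
    have hc := Finset.card_le_card this
    rw [Nat.card_Ico] at hc
    have h3 : M - (M - a) ≤ a := by omega
    exact Nat.mul_le_mul_left K (le_trans hc h3)
  calc ((range (K * M)).filter (fun n => (s2 (n + a) : ℤ) - s2 n = d)).card
      ≤ _ := Finset.card_le_card hsub
    _ ≤ _ + _ := Finset.card_union_le _ _
    _ ≤ K * sct a d m + K * a := by rw [h1]; exact Nat.add_le_add_left h2 _
    _ = K * (sct a d m + a) := by ring

end main

section main2

variable (a : ℕ) (d : ℤ)

lemma A_mono (N N' : ℕ) (h : N ≤ N') :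
    ((range N).filter (fun n => (s2 (n + a) : ℤ) - s2 n = d)).card ≤
      ((range N').filter (fun n => (s2 (n + a) : ℤ) - s2 n = d)).card :=
  Finset.card_le_card (Finset.filter_subset_filter _ (Finset.range_subset_range.2 h))

lemma A_upper (m N : ℕ) :
    ((range N).filter (fun n => (s2 (n + a) : ℤ) - s2 n = d)).card ≤
      (N / 2 ^ m + 1) * (sct a d m + a) := by
  have hMpos : 0 < 2 ^ m := by positivity
  have hN : N ≤ (N / 2 ^ m + 1) * 2 ^ m := by
    have h1 := Nat.div_add_mod' N (2 ^ m)
    have h2 : N % 2 ^ m < 2 ^ m := Nat.mod_lt _ hMpos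
    calc N = N / 2 ^ m * 2 ^ m + N % 2 ^ m := h1.symm
      _ ≤ N / 2 ^ m * 2 ^ m + 2 ^ m := by omega
      _ = (N / 2 ^ m + 1) * 2 ^ m := by ring
  exact le_trans (A_mono a d N _ hN) (A_upper_exact a d m (N / 2 ^ m + 1))

lemma sct_two_mul (m : ℕ) : 2 * sct a d m ≤ sct a d (m + 1) := by
  set M := 2 ^ m with hM
  have hMpos : 0 < M := by positivity
  rw [sct, ← count_mod_exact M 2 (fun r => r + a < M ∧ (s2 (r + a) : ℤ) - s2 r = d)]
  apply Finset.card_le_card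
  intro n hn
  simp only [Finset.mem_filter, Finset.mem_range] at hn ⊢
  obtain ⟨hn1, hn2, hn3⟩ := hn
  have hdm : n / M * M + n % M = n := Nat.div_add_mod' n M
  have hdlt : n / M < 2 := (Nat.div_lt_iff_lt_mul hMpos).2 (by omega)
  have hdle : n / M * M ≤ 1 * M := Nat.mul_le_mul_right M (by omega)
  have hpow : (2:ℕ) ^ (m + 1) = 2 * M := by rw [hM]; ring
  refine ⟨by omega, by omega, ?_⟩
  rw [key_mod a m n hn2]
  exact hn3

lemma sct_upper (m j : ℕ) : sct a d (m + j) ≤ 2 ^ j * (sct a d m + a) := by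
  have h1 : sct a d (m + j) ≤
      ((range (2 ^ j * 2 ^ m)).filter (fun n => (s2 (n + a) : ℤ) - s2 n = d)).card := by
    rw [sct]
    have hpow : (2:ℕ) ^ (m + j) = 2 ^ j * 2 ^ m := by rw [pow_add]; ring
    rw [hpow]
    apply Finset.card_le_card
    intro n hn
    simp only [Finset.mem_filter, Finset.mem_range] at hn ⊢
    exact ⟨hn.1, hn.2.2⟩
  exact le_trans h1 (A_upper_exact a d m (2 ^ j))

/-- The candidate density. -/
noncomputable def xlim : ℝ := ⨆ m, (sct a d m : ℝ) / 2 ^ m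

lemma xseq_mono : Monotone (fun m => (sct a d m : ℝ) / 2 ^ m) := by
  apply monotone_nat_of_le_succ
  intro m
  rw [div_le_div_iff₀ (by positivity) (by positivity)]
  have h : (2 * sct a d m : ℝ) ≤ sct a d (m + 1) := by exact_mod_cast sct_two_mul a d m
  have hp : (0:ℝ) < 2 ^ m := by positivity
  rw [pow_succ]
  nlinarith

lemma xseq_le_one (m : ℕ) : (sct a d m : ℝ) / 2 ^ m ≤ 1 := by
  rw [div_le_one (by positivity)]
  exact_mod_cast sct_le_pow a d m

lemma xseq_bdd : BddAbove (Set.range fun m => (sct a d m : ℝ) / 2 ^ m) := by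
  refine ⟨1, ?_⟩
  rintro x ⟨m, rfl⟩
  exact xseq_le_one a d m

lemma xseq_le_xlim (m : ℕ) : (sct a d m : ℝ) / 2 ^ m ≤ xlim a d :=
  le_ciSup (xseq_bdd a d) m

lemma xlim_le (m : ℕ) : xlim a d ≤ (sct a d m : ℝ) / 2 ^ m + a / 2 ^ m := by
  apply ciSup_le
  intro k
  rcases le_total k m with h | h
  · refine le_trans (xseq_mono a d h) ?_
    have : (0:ℝ) ≤ (a : ℝ) / 2 ^ m := by positivity
    linarith
  · obtain ⟨j, rfl⟩ := Nat.exists_eq_add_of_le h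
    have h1 : (sct a d (m + j) : ℝ) ≤ 2 ^ j * (sct a d m + a) := by
      have := sct_upper a d m j
      push_cast
      exact_mod_cast this
    rw [← add_div, div_le_div_iff₀ (by positivity) (by positivity)]
    have hpow : (2:ℝ) ^ (m + j) = 2 ^ j * 2 ^ m := by rw [pow_add]; ring
    have hp : (0:ℝ) < 2 ^ m := by positivity
    calc (sct a d (m + j) : ℝ) * 2 ^ m ≤ (2 ^ j * (sct a d m + a)) * 2 ^ m := by nlinarith
      _ = ((sct a d m : ℝ) + a) * 2 ^ (m + j) := by rw [hpow]; ring

lemma main_est (m N : ℕ) (hQ : 2 ^ m ≤ N / 2 ^ m) :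
    |(((range N).filter (fun n => (s2 (n + a) : ℤ) - s2 n = d)).card : ℝ) / N - xlim a d|
      ≤ 2 * ((a : ℝ) + 1) / 2 ^ m := by
  set A : ℝ := (((range N).filter (fun n => (s2 (n + a) : ℤ) - s2 n = d)).card : ℝ) with hA
  set s : ℝ := (sct a d m : ℝ) with hs
  set q : ℝ := ((N / 2 ^ m : ℕ) : ℝ) with hqdef
  have hMpos : (0:ℝ) < 2 ^ m := by positivity
  have hM1 : (1:ℝ) ≤ 2 ^ m := by exact_mod_cast Nat.one_le_two_pow (n := m)
  have hq : (2:ℝ) ^ m ≤ q := by rw [hqdef]; exact_mod_cast hQ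
  have hq1 : (1:ℝ) ≤ q := le_trans hM1 hq
  have hNq : q * 2 ^ m ≤ (N : ℝ) := by
    rw [hqdef]
    exact_mod_cast Nat.div_mul_le_self N (2 ^ m)
  have hNq2 : (N : ℝ) ≤ (q + 1) * 2 ^ m := by
    rw [hqdef]
    have h1 := Nat.div_add_mod' N (2 ^ m)
    have h2 : N % 2 ^ m < 2 ^ m := Nat.mod_lt _ (by positivity)
    have : (N : ℕ) ≤ (N / 2 ^ m + 1) * 2 ^ m := by
      calc N = N / 2 ^ m * 2 ^ m + N % 2 ^ m := h1.symm
        _ ≤ N / 2 ^ m * 2 ^ m + 2 ^ m := by omega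
        _ = (N / 2 ^ m + 1) * 2 ^ m := by ring
    exact_mod_cast this
  have hNpos : (0:ℝ) < N := by nlinarith
  have hlow : q * s ≤ A := by
    rw [hqdef, hs, hA]
    exact_mod_cast A_lower a d m N
  have hupp : A ≤ (q + 1) * (s + a) := by
    rw [hqdef, hs, hA]
    have := A_upper a d m N
    push_cast
    exact_mod_cast this
  have hs1 : s ≤ 2 ^ m := by rw [hs]; exact_mod_cast sct_le_pow a d m
  have hs0 : (0:ℝ) ≤ s := by rw [hs]; positivity
  have hA0 : (0:ℝ) ≤ A := by rw [hA]; positivity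
  have hx1 : s / 2 ^ m ≤ xlim a d := xseq_le_xlim a d m
  have hx2 : xlim a d ≤ s / 2 ^ m + a / 2 ^ m := xlim_le a d m
  have ha0 : (0:ℝ) ≤ a := Nat.cast_nonneg a
  have hsq : s ≤ q := le_trans hs1 hq
  clear_value A s q
  clear hA hs hqdef
  rw [abs_sub_le_iff]
  constructor
  · have key : A / N ≤ (s + 2 * ((a:ℝ) + 1)) / 2 ^ m := by
      rw [div_le_div_iff₀ hNpos hMpos]
      have e1 : A * 2 ^ m ≤ (q + 1) * (s + a) * 2 ^ m :=
        mul_le_mul_of_nonneg_right hupp hMpos.le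
      have e2 : (q + 1) * (s + a) ≤ (s + 2 * ((a:ℝ) + 1)) * q := by
        nlinarith [mul_nonneg ha0 (sub_nonneg.2 hq1)]
      have e2' : (q + 1) * (s + a) * 2 ^ m ≤ (s + 2 * ((a:ℝ) + 1)) * q * 2 ^ m :=
        mul_le_mul_of_nonneg_right e2 hMpos.le
      have e3 : (s + 2 * ((a:ℝ) + 1)) * (q * 2 ^ m) ≤ (s + 2 * ((a:ℝ) + 1)) * N :=
        mul_le_mul_of_nonneg_left hNq (by linarith)
      have e4 : (s + 2 * ((a:ℝ) + 1)) * q * 2 ^ m = (s + 2 * ((a:ℝ) + 1)) * (q * 2 ^ m) := by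
        ring
      linarith
    have hsplit : (s + 2 * ((a:ℝ) + 1)) / 2 ^ m = s / 2 ^ m + 2 * ((a:ℝ) + 1) / 2 ^ m := by
      ring
    linarith
  · have key : (s - ((a:ℝ) + 2)) / 2 ^ m ≤ A / N := by
      rw [div_le_div_iff₀ hMpos hNpos]
      rcases le_or_gt (s - ((a:ℝ) + 2)) 0 with h | h
      · have e1 : (s - ((a:ℝ) + 2)) * N ≤ 0 := mul_nonpos_of_nonpos_of_nonneg h hNpos.le
        have e2 : (0:ℝ) ≤ A * 2 ^ m := mul_nonneg hA0 hMpos.le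
        linarith
      · have e1 : (s - ((a:ℝ) + 2)) * N ≤ (s - ((a:ℝ) + 2)) * ((q + 1) * 2 ^ m) :=
          mul_le_mul_of_nonneg_left hNq2 h.le
        have e2 : (s - ((a:ℝ) + 2)) * (q + 1) ≤ q * s := by
          nlinarith [mul_nonneg ha0 (by linarith : (0:ℝ) ≤ q)]
        have e2' : (s - ((a:ℝ) + 2)) * (q + 1) * 2 ^ m ≤ q * s * 2 ^ m :=
          mul_le_mul_of_nonneg_right e2 hMpos.le
        have e3 : q * s * 2 ^ m ≤ A * 2 ^ m :=
          mul_le_mul_of_nonneg_right hlow hMpos.le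
        have e4 : (s - ((a:ℝ) + 2)) * ((q + 1) * 2 ^ m) = (s - ((a:ℝ) + 2)) * (q + 1) * 2 ^ m := by
          ring
        linarith
    have hsplit : (s - ((a:ℝ) + 2)) / 2 ^ m = s / 2 ^ m - ((a:ℝ) + 2) / 2 ^ m := by ring
    have hsplit2 : (a:ℝ) / 2 ^ m + ((a:ℝ) + 2) / 2 ^ m = 2 * ((a:ℝ) + 1) / 2 ^ m := by ring
    linarith

end main2

theorem density_exists (a : ℕ) (d : ℤ) : ∃ x : ℝ, hasDensity a d x := by
  refine ⟨xlim a d, ?_⟩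
  rw [hasDensity, Metric.tendsto_atTop]
  intro ε hε
  obtain ⟨m, hm⟩ : ∃ m : ℕ, 2 * ((a : ℝ) + 1) / 2 ^ m < ε := by
    obtain ⟨m, hm⟩ := pow_unbounded_of_one_lt (2 * ((a : ℝ) + 1) / ε) (one_lt_two (α := ℝ))
    refine ⟨m, ?_⟩
    rw [div_lt_iff₀ (by positivity)]
    rw [div_lt_iff₀ hε] at hm
    linarith [hm]
  refine ⟨2 ^ m * 2 ^ m, ?_⟩
  intro N hN
  rw [Real.dist_eq]
  have hQ : 2 ^ m ≤ N / 2 ^ m := (Nat.le_div_iff_mul_le (by positivity)).2 hN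
  exact lt_of_le_of_lt (main_est a d m N hQ) hm
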